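/- Let H be a division ring of finite dimension over its center k, let k(t) be the field of rational functions over k, and let L/k(t) be a finite Galois extension of commutative fields with Galois group G. Assume that Ω = H ⊗_k L is a division ring. Then: (i) for each σ ∈ G, the map σ̃ = id_H ⊗ σ is a ring automorphism of Ω fixing pointwise the image of H ⊗_k k(t) under the canonical map H ⊗_k k(t) → H ⊗_k L; (ii) the map σ ↦ σ̃ is a group isomorphism from G onto the group Γ of all ring automorphisms of Ω that fix the image of H ⊗_k k(t) pointwise; and (iii) the set of elements of Ω fixed by every element of Γ is exactly the image of H ⊗_k k(t). -/

import Mathlib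

open TensorProduct

section

variable (k : Type*) [Field k]
  (H : Type*) [DivisionRing H] [Algebra k H]
  (L : Type*) [Field L] [Algebra k L] [Algebra (RatFunc k) L]
  [IsScalarTower k (RatFunc k) L]

/-- The canonical map `H ⊗[k] k(t) → H ⊗[k] L`, tensor product of the identity of `H`
with the inclusion `k(t) → L`. -/
noncomputable def canMap : H ⊗[k] RatFunc k →ₐ[k] H ⊗[k] L :=
  Algebra.TensorProduct.map (AlgHom.id k H) (IsScalarTower.toAlgHom k (RatFunc k) L)

/-- For `σ ∈ Gal(L/k(t))`, the ring automorphism `σ̃ = id_H ⊗ σ` of `Ω = H ⊗[k] L`. -/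
noncomputable def tildeAut (σ : L ≃ₐ[RatFunc k] L) : RingAut (H ⊗[k] L) :=
  (Algebra.TensorProduct.congr (AlgEquiv.refl (R := k) (A₁ := H))
    (σ.restrictScalars k)).toRingEquiv

end

set_option linter.unusedSectionVars false
set_option maxHeartbeats 1000000

section Aux

open Module

variable {k : Type*} [Field k]
  {H : Type*} [DivisionRing H] [Algebra k H]
  {L : Type*} [Field L] [Algebra k L] [Algebra (RatFunc k) L]
  [IsScalarTower k (RatFunc k) L]
  {ι : Type*} [DecidableEq ι] (b : Basis ι k H)
  {ιL : Type*} [DecidableEq ιL] (cb : Basis ιL k L)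

lemma tildeAut_tmul (σ : L ≃ₐ[RatFunc k] L) (h : H) (l : L) :
    tildeAut k H L σ (h ⊗ₜ[k] l) = h ⊗ₜ[k] σ l := rfl

lemma canMap_tmul (h : H) (c : RatFunc k) :
    canMap k H L (h ⊗ₜ[k] c) = h ⊗ₜ[k] algebraMap (RatFunc k) L c := rfl

/-- `H ⊗[k] L ≃ ι →₀ L` for a `k`-basis of `H`. -/
noncomputable def eqvL : H ⊗[k] L ≃ₗ[k] (ι →₀ L) :=
  (TensorProduct.congr b.repr (LinearEquiv.refl k L)).trans
    (TensorProduct.finsuppScalarLeft k L ι)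

lemma eqvL_tmul (h : H) (l : L) (i : ι) : eqvL b (h ⊗ₜ[k] l) i = b.repr h i • l := by
  simp [eqvL]

lemma eqvL_symm_single (i : ι) (l : L) :
    (eqvL b).symm (Finsupp.single i l) = b i ⊗ₜ[k] l := by
  rw [LinearEquiv.symm_apply_eq]
  ext j
  simp [eqvL_tmul, Finsupp.single_apply, Basis.repr_self]

/-- `H ⊗[k] L ≃ ιL →₀ H` for a `k`-basis of `L`. -/
noncomputable def eqvH : H ⊗[k] L ≃ₗ[k] (ιL →₀ H) :=
  (TensorProduct.congr (LinearEquiv.refl k H) cb.repr).trans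
    (TensorProduct.finsuppScalarRight k k H ιL)

lemma eqvH_tmul (h : H) (l : L) (j : ιL) : eqvH cb (h ⊗ₜ[k] l) j = cb.repr l j • h := by
  simp [eqvH]

lemma eqvH_symm_single (j : ιL) (h : H) :
    (eqvH cb).symm (Finsupp.single j h) = h ⊗ₜ[k] cb j := by
  rw [LinearEquiv.symm_apply_eq]
  ext i
  simp [eqvH_tmul, Finsupp.single_apply, Basis.repr_self]

lemma eqvH_mul_left (h : H) (x : H ⊗[k] L) (j : ιL) :
    eqvH cb ((h ⊗ₜ[k] (1:L)) * x) j = h * eqvH cb x j := by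
  induction x using TensorProduct.induction_on with
  | zero => simp
  | tmul d m =>
      rw [Algebra.TensorProduct.tmul_mul_tmul, one_mul, eqvH_tmul, eqvH_tmul, mul_smul_comm]
  | add x y hx hy => simp [mul_add, map_add, Finsupp.add_apply, hx, hy]

lemma eqvH_mul_right (h : H) (x : H ⊗[k] L) (j : ιL) :
    eqvH cb (x * (h ⊗ₜ[k] (1:L))) j = eqvH cb x j * h := by
  induction x using TensorProduct.induction_on with
  | zero => simp
  | tmul d m =>
      rw [Algebra.TensorProduct.tmul_mul_tmul, mul_one, eqvH_tmul, eqvH_tmul, smul_mul_assoc]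
  | add x y hx hy => simp [add_mul, map_add, Finsupp.add_apply, hx, hy]

lemma eqvL_tildeAut (σ : L ≃ₐ[RatFunc k] L) (x : H ⊗[k] L) (i : ι) :
    eqvL b (tildeAut k H L σ x) i = σ (eqvL b x i) := by
  induction x using TensorProduct.induction_on with
  | zero => simp
  | tmul h l =>
      rw [tildeAut_tmul, eqvL_tmul, eqvL_tmul]
      exact (map_smul (σ.restrictScalars k).toLinearMap _ _).symm
  | add x y hx hy => simp [map_add, Finsupp.add_apply, hx, hy]

/-- `1 ⊗ l` is central in `H ⊗[k] L`. -/
lemma tmul_one_comm (l : L) (w : H ⊗[k] L) :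
    w * ((1:H) ⊗ₜ[k] l) = ((1:H) ⊗ₜ[k] l) * w := by
  induction w using TensorProduct.induction_on with
  | zero => simp
  | tmul h m => rw [Algebra.TensorProduct.tmul_mul_tmul, Algebra.TensorProduct.tmul_mul_tmul,
      mul_one, one_mul, mul_comm]
  | add x y hx hy => rw [add_mul, mul_add, hx, hy]

lemma includeRight_inj [Nontrivial (H ⊗[k] L)] {l l' : L}
    (h : (1:H) ⊗ₜ[k] l = (1:H) ⊗ₜ[k] l') : l = l' :=
  RingHom.injective ((Algebra.TensorProduct.includeRight : L →ₐ[k] H ⊗[k] L).toRingHom) h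

/-- Elements commuting with `H ⊗ 1` lie in `1 ⊗ L`, when `H` is central over `k`. -/
lemma central_mem (hcenter : Subalgebra.center k H = ⊥) (z : H ⊗[k] L)
    (hz : ∀ h : H, (h ⊗ₜ[k] (1:L)) * z = z * (h ⊗ₜ[k] (1:L))) :
    ∃ l : L, z = (1:H) ⊗ₜ[k] l := by
  classical
  let cb : Basis (Basis.ofVectorSpaceIndex k L) k L := Basis.ofVectorSpace k L
  have key : ∀ j, ∃ a : k, eqvH cb z j = algebraMap k H a := by
    intro j
    have : eqvH cb z j ∈ Subalgebra.center k H := by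
      rw [Subalgebra.mem_center_iff]
      intro h
      have := congrArg (fun w => w j) (congrArg (eqvH cb) (hz h))
      simpa [eqvH_mul_left, eqvH_mul_right] using this
    rw [hcenter, Algebra.mem_bot] at this
    obtain ⟨a, ha⟩ := this
    exact ⟨a, ha.symm⟩
  choose a ha using key
  refine ⟨∑ j ∈ (eqvH cb z).support, a j • cb j, ?_⟩
  rw [TensorProduct.tmul_sum]
  symm
  calc ∑ j ∈ (eqvH cb z).support, (1:H) ⊗ₜ[k] (a j • cb j)
      = ∑ j ∈ (eqvH cb z).support, (eqvH cb).symm (Finsupp.single j (eqvH cb z j)) := by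
        refine Finset.sum_congr rfl fun j _ => ?_
        rw [eqvH_symm_single, ha j, Algebra.algebraMap_eq_smul_one, TensorProduct.smul_tmul]
    _ = (eqvH cb).symm (∑ j ∈ (eqvH cb z).support, Finsupp.single j (eqvH cb z j)) :=
        (map_sum _ _ _).symm
    _ = z := by rw [← Finsupp.sum, Finsupp.sum_single, LinearEquiv.symm_apply_apply]

/-- Any element fixed by all `σ̃` lies in the image of `H ⊗[k] k(t)`. -/
lemma fixed_mem [FiniteDimensional k H] [FiniteDimensional (RatFunc k) L]
    [IsGalois (RatFunc k) L] (x : H ⊗[k] L)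
    (hx : ∀ σ : L ≃ₐ[RatFunc k] L, tildeAut k H L σ x = x) :
    x ∈ Set.range (canMap k H L) := by
  classical
  let b : Basis (Basis.ofVectorSpaceIndex k H) k H := Basis.ofVectorSpace k H
  have key : ∀ i, ∃ c : RatFunc k, algebraMap (RatFunc k) L c = eqvL b x i := by
    intro i
    have hfix : ∀ σ : L ≃ₐ[RatFunc k] L, σ (eqvL b x i) = eqvL b x i := by
      intro σ
      conv_rhs => rw [← hx σ]
      rw [eqvL_tildeAut]
    have hmem : eqvL b x i ∈
        IntermediateField.fixedField (⊤ : Subgroup (L ≃ₐ[RatFunc k] L)) :=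
      fun σ => hfix σ.1
    have heq : IntermediateField.fixedField (⊤ : Subgroup (L ≃ₐ[RatFunc k] L)) = ⊥ :=
      ((IsGalois.tfae (F := RatFunc k) (E := L)).out 0 1).mp ‹IsGalois (RatFunc k) L›
    rw [heq] at hmem
    exact IntermediateField.mem_bot.mp hmem
  choose c hc using key
  refine ⟨∑ i ∈ (eqvL b x).support, b i ⊗ₜ[k] c i, ?_⟩
  rw [map_sum]
  calc ∑ i ∈ (eqvL b x).support, canMap k H L (b i ⊗ₜ[k] c i)
      = ∑ i ∈ (eqvL b x).support, (eqvL b).symm (Finsupp.single i (eqvL b x i)) := by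
        refine Finset.sum_congr rfl fun i _ => ?_
        rw [canMap_tmul, hc i, eqvL_symm_single]
    _ = (eqvL b).symm (∑ i ∈ (eqvL b x).support, Finsupp.single i (eqvL b x i)) :=
        (map_sum _ _ _).symm
    _ = x := by rw [← Finsupp.sum, Finsupp.sum_single, LinearEquiv.symm_apply_apply]

/-- Every `g ∈ Γ` sends `1 ⊗ l` to some `1 ⊗ m`. -/
lemma aut_tmul (hcenter : Subalgebra.center k H = ⊥) (g : RingAut (H ⊗[k] L)) (l : L) :
    ∃ m : L, g ((1:H) ⊗ₜ[k] l) = (1:H) ⊗ₜ[k] m := by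
  obtain ⟨m, hm⟩ := central_mem hcenter (g ((1:H) ⊗ₜ[k] l)) (fun h => by
    calc (h ⊗ₜ[k] (1:L)) * g ((1:H) ⊗ₜ[k] l)
        = g (g.symm (h ⊗ₜ[k] (1:L)) * ((1:H) ⊗ₜ[k] l)) := by
          rw [map_mul, RingEquiv.apply_symm_apply]
      _ = g (((1:H) ⊗ₜ[k] l) * g.symm (h ⊗ₜ[k] (1:L))) := by rw [tmul_one_comm]
      _ = g ((1:H) ⊗ₜ[k] l) * (h ⊗ₜ[k] (1:L)) := by
          rw [map_mul, RingEquiv.apply_symm_apply])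
  exact ⟨m, hm⟩

lemma tilde_surj (hcenter : Subalgebra.center k H = ⊥) [Nontrivial (H ⊗[k] L)]
    (f : RingAut (H ⊗[k] L))
    (hf : ∀ y ∈ Set.range (canMap k H L), f y = y) :
    ∃ σ : L ≃ₐ[RatFunc k] L, tildeAut k H L σ = f := by
  choose σf hσf using aut_tmul hcenter f
  choose τf hτf using aut_tmul hcenter (f.symm : RingAut (H ⊗[k] L))
  have hfix1 : ∀ h : H, f (h ⊗ₜ[k] (1:L)) = h ⊗ₜ[k] (1:L) := by
    intro h
    have h1 : canMap k H L (h ⊗ₜ[k] (1:RatFunc k)) = h ⊗ₜ[k] (1:L) := by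
      rw [canMap_tmul, map_one]
    exact hf _ ⟨_, h1⟩
  refine ⟨{
      toFun := σf
      invFun := τf
      left_inv := fun l => includeRight_inj (by
        rw [← hτf (σf l), ← hσf l, RingEquiv.symm_apply_apply])
      right_inv := fun l => includeRight_inj (by
        rw [← hσf (τf l), ← hτf l]
        exact f.apply_symm_apply _)
      map_mul' := fun a c => includeRight_inj (by
        have h1 : (1:H) ⊗ₜ[k] (a * c) = ((1:H) ⊗ₜ[k] a) * ((1:H) ⊗ₜ[k] c) := by
          rw [Algebra.TensorProduct.tmul_mul_tmul, one_mul]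
        rw [← hσf (a * c), h1, map_mul, hσf, hσf,
          Algebra.TensorProduct.tmul_mul_tmul, one_mul])
      map_add' := fun a c => includeRight_inj (by
        rw [← hσf (a + c), TensorProduct.tmul_add, map_add, hσf, hσf,
          ← TensorProduct.tmul_add])
      commutes' := fun c => includeRight_inj (by
        rw [← hσf]
        exact hf _ ⟨(1:H) ⊗ₜ[k] c, rfl⟩) }, ?_⟩
  refine RingEquiv.ext fun x => ?_
  induction x using TensorProduct.induction_on with
  | zero => simp
  | tmul h l =>
      have h1 : h ⊗ₜ[k] l = (h ⊗ₜ[k] (1:L)) * ((1:H) ⊗ₜ[k] l) := by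
        rw [Algebra.TensorProduct.tmul_mul_tmul, mul_one, one_mul]
      rw [tildeAut_tmul, h1, map_mul, hfix1, hσf,
        Algebra.TensorProduct.tmul_mul_tmul]
      simp only [mul_one, one_mul]
      rfl
  | add x y hx hy => rw [map_add, map_add, hx, hy]

lemma tilde_inj [Nontrivial (H ⊗[k] L)] :
    Function.Injective (tildeAut k H L) := by
  intro σ τ h
  refine AlgEquiv.ext fun l => ?_
  have h2 : (1:H) ⊗ₜ[k] σ l = (1:H) ⊗ₜ[k] τ l := by
    have := congrArg (fun g : RingAut (H ⊗[k] L) => g ((1:H) ⊗ₜ[k] l)) h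
    simpa [tildeAut_tmul] using this
  exact includeRight_inj h2

lemma tilde_mul (σ τ : L ≃ₐ[RatFunc k] L) :
    tildeAut k H L (σ * τ) = tildeAut k H L σ * tildeAut k H L τ := by
  refine RingEquiv.ext fun x => ?_
  show tildeAut k H L (σ * τ) x = tildeAut k H L σ (tildeAut k H L τ x)
  induction x using TensorProduct.induction_on with
  | zero => simp
  | tmul h l => rfl
  | add x y hx hy => rw [map_add, map_add, map_add, hx, hy]

end Aux

/-- **Proposition 5.** Let `H` be a division ring of finite dimension over its center `k`,
let `L/k(t)` be a finite Galois extension of commutative fields with group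
`G = Gal(L/k(t))`, and assume `Ω = H ⊗[k] L` is a division ring. Then:
(i) for every `σ ∈ G`, the automorphism `σ̃ = id_H ⊗ σ` of `Ω` fixes the image of
`H ⊗[k] k(t)` pointwise;
(ii) `σ ↦ σ̃` is a group isomorphism from `G` onto the group `Γ` of all ring automorphisms
of `Ω` fixing the image of `H ⊗[k] k(t)` pointwise;
(iii) the elements of `Ω` fixed by every element of `Γ` are exactly the image of
`H ⊗[k] k(t)`.  In other words, `Ω/H(t)` is Galois of group `G`. -/
theorem galois_tensor_extension
    (k : Type*) [Field k]
    (H : Type*) [DivisionRing H] [Algebra k H] [FiniteDimensional k H]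
    (hcenter : Subalgebra.center k H = ⊥)
    (L : Type*) [Field L] [Algebra k L] [Algebra (RatFunc k) L]
    [IsScalarTower k (RatFunc k) L]
    [FiniteDimensional (RatFunc k) L] [IsGalois (RatFunc k) L]
    (hdiv : Nontrivial (H ⊗[k] L) ∧ ∀ x : H ⊗[k] L, x ≠ 0 → IsUnit x) :
    -- (i) each `σ̃` fixes the image of `H ⊗[k] k(t)` pointwise
    (∀ σ : L ≃ₐ[RatFunc k] L, ∀ y ∈ Set.range (canMap k H L),
        tildeAut k H L σ y = y) ∧
    -- (ii) `σ ↦ σ̃` is a group isomorphism from `G` onto `Γ`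
    (∀ σ τ : L ≃ₐ[RatFunc k] L,
        tildeAut k H L (σ * τ) = tildeAut k H L σ * tildeAut k H L τ) ∧
    Function.Injective (tildeAut k H L) ∧
    (∀ f : RingAut (H ⊗[k] L), (∀ y ∈ Set.range (canMap k H L), f y = y) →
        ∃ σ : L ≃ₐ[RatFunc k] L, tildeAut k H L σ = f) ∧
    -- (iii) the fixed elements of `Γ` are exactly the image of `H ⊗[k] k(t)`
    (∀ x : H ⊗[k] L,
        (∀ f : RingAut (H ⊗[k] L), (∀ y ∈ Set.range (canMap k H L), f y = y) → f x = x)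
          ↔ x ∈ Set.range (canMap k H L)) := by
  obtain ⟨hnt, -⟩ := hdiv
  have hi : ∀ σ : L ≃ₐ[RatFunc k] L, ∀ y ∈ Set.range (canMap k H L),
      tildeAut k H L σ y = y := by
    rintro σ y ⟨w, rfl⟩
    induction w using TensorProduct.induction_on with
    | zero => simp
    | tmul h c => rw [canMap_tmul, tildeAut_tmul, AlgEquiv.commutes]
    | add x y hx hy => rw [map_add, map_add, hx, hy]
  haveI := hnt
  refine ⟨hi, tilde_mul, tilde_inj (k := k) (H := H) (L := L), fun f hf => tilde_surj hcenter f hf, fun x => ?_⟩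
  constructor
  · intro hx
    exact fixed_mem x fun σ => hx (tildeAut k H L σ) (hi σ)
  · rintro ⟨w, rfl⟩ f hf
    exact hf _ ⟨w, rfl⟩
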